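/- Coupon-collector integral formula (Equation 1). Let n ≥ 1 and let d = (d_1,…,d_n) be a probability vector with d_i > 0 for all i. Let X_1, X_2, … be an i.i.d. sequence of random variables taking values in {1,…,n} with distribution d, and let T = inf{ t ≥ 1 : {X_1,…,X_t} = {1,…,n} } be the first time all n values have appeared. Then T is almost surely finite and its expectation equals E[T] = ∫_0^∞ (1 − ∏_{i=1}^n (1 − e^{−d_i t})) dt. -/

import Mathlib

open Finset MeasureTheory ProbabilityTheory
open scoped ENNReal NNReal

lemma cc_one_sub_prod_one_sub {ι : Type*} [DecidableEq ι] (s : Finset ι) (x : ι → ℝ) :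
    1 - ∏ i ∈ s, (1 - x i)
      = ∑ S ∈ s.powerset.erase ∅, (-1 : ℝ) ^ (S.card + 1) * ∏ i ∈ S, x i := by
  have h : ∏ i ∈ s, (1 - x i)
      = ∑ S ∈ s.powerset, (-1 : ℝ) ^ S.card * ∏ i ∈ S, x i := by
    have h0 := Finset.prod_add (fun i => -x i) (fun _ => (1 : ℝ)) s
    simp only [Finset.prod_const_one, mul_one] at h0
    calc ∏ i ∈ s, (1 - x i) = ∏ i ∈ s, (-x i + 1) := by
          refine Finset.prod_congr rfl fun i _ => by ring
      _ = ∑ S ∈ s.powerset, ∏ i ∈ S, (-x i) := h0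
      _ = ∑ S ∈ s.powerset, (-1 : ℝ) ^ S.card * ∏ i ∈ S, x i := by
          refine Finset.sum_congr rfl fun S _ => ?_
          calc ∏ i ∈ S, (-x i) = ∏ i ∈ S, ((-1) * x i) := by
                refine Finset.prod_congr rfl fun i _ => by ring
            _ = (-1 : ℝ) ^ S.card * ∏ i ∈ S, x i := by
                rw [Finset.prod_mul_distrib, Finset.prod_const]
  have hmem : (∅ : Finset ι) ∈ s.powerset := Finset.empty_mem_powerset s
  rw [h, ← Finset.add_sum_erase _ _ hmem]
  simp only [Finset.card_empty, pow_zero, Finset.prod_empty, mul_one]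
  rw [show (1:ℝ) - (1 + ∑ S ∈ s.powerset.erase ∅, (-1:ℝ) ^ S.card * ∏ i ∈ S, x i)
      = ∑ S ∈ s.powerset.erase ∅, -((-1:ℝ) ^ S.card * ∏ i ∈ S, x i) by
    rw [Finset.sum_neg_distrib]; ring]
  refine Finset.sum_congr rfl fun S _ => by ring

/-- **Coupon-collector integral formula (Equation 1).**
Let `d` be a fully-supported probability vector on `{1,…,n}` and `X_1, X_2, …` an
i.i.d. sequence with distribution `d` (here `X j` is the `(j+1)`-st draw).  Let
`T = inf {t ≥ 1 : {X_1,…,X_t} = {1,…,n}}` be the first time all `n` values have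
appeared.  Then `T` is almost surely finite and
`E[T] = ∫_0^∞ (1 − ∏ i, (1 − e^{−d_i t})) dt`. -/

theorem coupon_collector_integral
    (n : ℕ) (hn : 1 ≤ n) (d : Fin n → ℝ)
    (hd : ∀ i, 0 < d i) (hsum : ∑ i, d i = 1)
    (Ω : Type) [MeasurableSpace Ω] (μ : Measure Ω) [IsProbabilityMeasure μ]
    (X : ℕ → Ω → Fin n) (hmeas : ∀ j, Measurable (X j))
    (hindep : iIndepFun X μ)
    (hlaw : ∀ j v, μ {ω | X j ω = v} = ENNReal.ofReal (d v)) :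
    (∀ᵐ ω ∂μ, ∃ t : ℕ, ∀ v : Fin n, ∃ j < t, X j ω = v) ∧
      ∫ ω, ((sInf {t : ℕ | ∀ v : Fin n, ∃ j < t, X j ω = v} : ℕ) : ℝ) ∂μ =
        ∫ t in Set.Ici (0 : ℝ), (1 - ∏ i, (1 - Real.exp (-(d i) * t))) := by
  classical
  -- basic notations
  set Nset : Ω → Set ℕ := fun ω => {t : ℕ | ∀ v : Fin n, ∃ j < t, X j ω = v} with hNset
  set Tf : Ω → ℕ := fun ω => sInf (Nset ω) with hTf
  set C : Finset (Fin n) → ℕ → Set Ω := fun S t => {ω | ∀ j < t, X j ω ∉ S} with hCdef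
  set dS : Finset (Fin n) → ℝ := fun S => ∑ i ∈ S, d i with hdS
  set q : Finset (Fin n) → ℝ := fun S => 1 - dS S with hqdef
  set E : Finset (Finset (Fin n)) :=
    (Finset.univ : Finset (Fin n)).powerset.erase ∅ with hE
  set c : Finset (Fin n) → ℝ := fun S => (-1 : ℝ) ^ (S.card + 1) with hc
  set p : ℕ → ℝ := fun t => ∑ S ∈ E, c S * q S ^ t with hp
  have hd1 : ∀ i, d i ≤ 1 := by
    intro i
    rw [← hsum]
    exact Finset.single_le_sum (f := d) (fun j _ => (hd j).le) (Finset.mem_univ i)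
  have hdSle : ∀ S : Finset (Fin n), dS S ≤ 1 := by
    intro S
    rw [← hsum]
    exact Finset.sum_le_sum_of_subset_of_nonneg (Finset.subset_univ S)
      (fun i _ _ => (hd i).le)
  have hdSpos : ∀ S : Finset (Fin n), S.Nonempty → 0 < dS S := by
    intro S ⟨i, hi⟩
    exact lt_of_lt_of_le (hd i) (Finset.single_le_sum (fun j _ => (hd j).le) hi)
  have hq0 : ∀ S, 0 ≤ q S := fun S => by
    simp only [hqdef, sub_nonneg]; exact hdSle S
  have hq1 : ∀ S : Finset (Fin n), S.Nonempty → q S < 1 := fun S hS => by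
    simp only [hqdef, sub_lt_self_iff]; exact hdSpos S hS
  have hEne : ∀ S ∈ E, S.Nonempty := by
    intro S hS
    rw [hE, Finset.mem_erase] at hS
    exact Finset.nonempty_iff_ne_empty.2 hS.1
  have hCmeas : ∀ (S : Finset (Fin n)) (t : ℕ), MeasurableSet (C S t) := by
    intro S t
    have : C S t = ⋂ j ∈ Finset.range t, X j ⁻¹' (↑S : Set (Fin n))ᶜ := by
      ext ω
      simp [hCdef, Set.mem_iInter, Finset.mem_range]
    rw [this]
    exact Finset.measurableSet_biInter _ fun j _ =>
      (hmeas j) ((S : Set (Fin n)).toFinite.measurableSet.compl)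
  -- the law of a single coordinate on finsets
  have hlaw' : ∀ (j : ℕ) (A : Finset (Fin n)),
      μ (X j ⁻¹' ↑A) = ENNReal.ofReal (∑ v ∈ A, d v) := by
    intro j A
    have hun : X j ⁻¹' ↑A = ⋃ v ∈ A, {ω | X j ω = v} := by
      ext ω; simp [Set.mem_preimage]
    rw [hun, measure_biUnion_finset]
    · rw [ENNReal.ofReal_sum_of_nonneg (fun v _ => (hd v).le)]
      exact Finset.sum_congr rfl fun v _ => hlaw j v
    · intro v _ w _ hvw
      refine Set.disjoint_left.2 fun ω h1 h2 => hvw ?_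
      rw [← h1, ← h2]
    · intro v _
      exact (hmeas j) (measurableSet_singleton v)
  -- independence
  have hC : ∀ (S : Finset (Fin n)) (t : ℕ), μ (C S t) = ENNReal.ofReal (q S ^ t) := by
    intro S t
    have hrw : C S t = ⋂ j ∈ Finset.range t, X j ⁻¹' (↑Sᶜ : Set (Fin n)) := by
      ext ω
      simp [hCdef, Set.mem_iInter, Finset.mem_range, Set.mem_preimage]
    have hone : ∀ j : ℕ, μ (X j ⁻¹' (↑Sᶜ : Set (Fin n))) = ENNReal.ofReal (q S) := by
      intro j
      rw [hlaw' j Sᶜ]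
      congr 1
      have := Finset.sum_add_sum_compl S d
      rw [hsum] at this
      simp only [hqdef, hdS]
      linarith
    rw [hrw, hindep.meas_biInter (S := Finset.range t)
      (s := fun j => X j ⁻¹' (↑Sᶜ : Set (Fin n)))
      (fun j _ => ⟨(↑Sᶜ : Set (Fin n)), (Sᶜ : Finset (Fin n)).measurableSet, rfl⟩)]
    · simp only [hone, Finset.prod_const, Finset.card_range]
      exact (ENNReal.ofReal_pow (hq0 S) t).symm
  set B : ℕ → Set Ω := fun t => ⋃ v : Fin n, C {v} t with hB
  have hBmeas : ∀ t, MeasurableSet (B t) :=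
    fun t => MeasurableSet.iUnion fun v => hCmeas {v} t
  have hBmem : ∀ t ω, ω ∈ B t ↔ t ∉ Nset ω := by
    intro t ω
    simp only [hB, Set.mem_iUnion, hCdef, Set.mem_setOf_eq, Finset.mem_singleton, hNset]
    push_neg
    rfl
  have hBbound : ∀ t, μ (B t) ≤ ∑ v : Fin n, ENNReal.ofReal ((1 - d v) ^ t) := by
    intro t
    refine le_trans (measure_iUnion_le _) ?_
    rw [tsum_fintype]
    refine Finset.sum_le_sum fun v _ => ?_
    rw [hC {v} t]
    have : q {v} = 1 - d v := by simp [hqdef, hdS]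
    rw [this]
  have hBtend : Filter.Tendsto (fun t => ∑ v : Fin n, ENNReal.ofReal ((1 - d v) ^ t))
      Filter.atTop (nhds 0) := by
    have h0 : (0 : ℝ≥0∞) = ∑ _v : Fin n, ENNReal.ofReal 0 := by simp
    rw [h0]
    refine tendsto_finset_sum _ fun v _ => ?_
    refine (ENNReal.continuous_ofReal.tendsto 0).comp ?_
    exact tendsto_pow_atTop_nhds_zero_of_lt_one (by linarith [hd1 v]) (by linarith [hd v])
  have hbadnull : μ (⋂ t, B t) = 0 := by
    refine le_antisymm ?_ zero_le
    refine ge_of_tendsto' hBtend fun t => ?_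
    exact le_trans (measure_mono (Set.iInter_subset _ t)) (hBbound t)
  have hfin : ∀ᵐ ω ∂μ, ∃ t, t ∈ Nset ω := by
    rw [MeasureTheory.ae_iff]
    convert hbadnull using 2
    ext ω
    simp only [Set.mem_setOf_eq, Set.mem_iInter, not_exists]
    exact ⟨fun h t => (hBmem t ω).2 (h t), fun h t => (hBmem t ω).1 (h t)⟩
  -- upward closedness
  have hup : ∀ ω (t t' : ℕ), t ∈ Nset ω → t ≤ t' → t' ∈ Nset ω := by
    intro ω t t' h htt' v
    obtain ⟨j, hj, hjv⟩ := h v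
    exact ⟨j, lt_of_lt_of_le hj htt', hjv⟩
  -- level sets
  have hSle : ∀ k : ℕ, {ω | Tf ω ≤ k} = (B k)ᶜ ∪ ⋂ t, B t := by
    intro k
    ext ω
    simp only [Set.mem_setOf_eq, Set.mem_union, Set.mem_compl_iff, Set.mem_iInter, hBmem,
      not_not]
    constructor
    · intro h
      by_cases hne : (Nset ω).Nonempty
      · left
        exact hup ω _ k (Nat.sInf_mem hne) h
      · right
        intro t ht
        exact hne ⟨t, ht⟩
    · rintro (h | h)
      · exact Nat.sInf_le h
      · have : Nset ω = ∅ := by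
          ext t; simp only [Set.mem_empty_iff_false, iff_false]; exact h t
        simp [hTf, this, Nat.sInf_empty]
  have hSlemeas : ∀ k : ℕ, MeasurableSet {ω | Tf ω ≤ k} := by
    intro k
    rw [hSle k]
    exact (hBmeas k).compl.union (MeasurableSet.iInter fun t => hBmeas t)
  have hTmeas : Measurable Tf := by
    refine measurable_to_countable' fun k => ?_
    cases k with
    | zero =>
        have : Tf ⁻¹' {0} = {ω | Tf ω ≤ 0} := by
          ext ω; simp [Nat.le_zero]
        rw [this]; exact hSlemeas 0
    | succ m =>
        have : Tf ⁻¹' {m + 1} = {ω | Tf ω ≤ m + 1} \ {ω | Tf ω ≤ m} := by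
          ext ω
          simp only [Set.mem_preimage, Set.mem_singleton_iff, Set.mem_diff, Set.mem_setOf_eq]
          omega
        rw [this]; exact (hSlemeas (m + 1)).diff (hSlemeas m)
  have hlevel : ∀ t : ℕ, μ {ω | t < Tf ω} = μ (B t) := by
    intro t
    refine measure_congr (Filter.eventuallyEq_set.2 ?_)
    filter_upwards [hfin] with ω hω
    obtain ⟨s, hs⟩ := hω
    have hne : (Nset ω).Nonempty := ⟨s, hs⟩
    simp only [Set.mem_setOf_eq, hBmem t ω, hTf]
    constructor
    · intro h ht
      exact absurd (Nat.sInf_le ht) (by omega)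
    · intro h
      by_contra hc
      push_neg at hc
      exact h (hup ω _ t (Nat.sInf_mem hne) hc)
  -- value of μ (B t)
  have hBval : ∀ t, (μ (B t)).toReal = p t := by
    intro t
    have hCsub : ∀ (S : Finset (Fin n)) ω, ω ∈ C S t ↔ ∀ v ∈ S, ω ∈ C {v} t := by
      intro S ω
      simp only [hCdef, Set.mem_setOf_eq, Finset.mem_singleton]
      constructor
      · intro h v hv j hj hx
        exact h j hj (hx ▸ hv)
      · intro h j hj hmem
        exact h _ hmem j hj rfl
    have hpoint : ∀ ω, Set.indicator (B t) (1 : Ω → ℝ) ω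
        = ∑ S ∈ E, c S * Set.indicator (C S t) (1 : Ω → ℝ) ω := by
      intro ω
      have hprod : ∀ S ∈ E, (∏ v ∈ S, Set.indicator (C {v} t) (1 : Ω → ℝ) ω)
          = Set.indicator (C S t) (1 : Ω → ℝ) ω := by
        intro S _
        by_cases hω : ω ∈ C S t
        · rw [Set.indicator_of_mem hω, Pi.one_apply]
          refine Finset.prod_eq_one fun v hv => ?_
          rw [Set.indicator_of_mem ((hCsub S ω).1 hω v hv), Pi.one_apply]
        · rw [Set.indicator_of_notMem hω]
          obtain ⟨v, hv, hvn⟩ : ∃ v ∈ S, ω ∉ C {v} t := by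
            by_contra hcon
            push_neg at hcon
            exact hω ((hCsub S ω).2 hcon)
          exact Finset.prod_eq_zero hv (Set.indicator_of_notMem hvn _)
      have hkey := cc_one_sub_prod_one_sub (Finset.univ : Finset (Fin n))
        (fun v => Set.indicator (C {v} t) (1 : Ω → ℝ) ω)
      have hL : 1 - ∏ v : Fin n, (1 - Set.indicator (C {v} t) (1 : Ω → ℝ) ω)
          = Set.indicator (B t) (1 : Ω → ℝ) ω := by
        by_cases hω : ω ∈ B t
        · rw [Set.indicator_of_mem hω, Pi.one_apply]
          obtain ⟨v, hv⟩ : ∃ v, ω ∈ C {v} t := Set.mem_iUnion.1 hω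
          rw [Finset.prod_eq_zero (Finset.mem_univ v)]
          · ring
          · rw [Set.indicator_of_mem hv, Pi.one_apply]
            ring
        · rw [Set.indicator_of_notMem hω, Finset.prod_eq_one, sub_self]
          intro v _
          have hnv : ω ∉ C {v} t := fun h => hω (Set.mem_iUnion.2 ⟨v, h⟩)
          rw [Set.indicator_of_notMem hnv]
          ring
      rw [← hL, hkey]
      refine Finset.sum_congr rfl fun S hS => ?_
      rw [hprod S hS]
    have hint : ∀ S ∈ E, Integrable (fun ω => c S * Set.indicator (C S t) (1 : Ω → ℝ) ω) μ := by
      intro S _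
      exact ((integrable_const (1 : ℝ)).indicator (hCmeas S t)).const_mul _
    calc (μ (B t)).toReal
        = ∫ ω, Set.indicator (B t) (1 : Ω → ℝ) ω ∂μ := (integral_indicator_one (hBmeas t)).symm
      _ = ∫ ω, ∑ S ∈ E, c S * Set.indicator (C S t) (1 : Ω → ℝ) ω ∂μ :=
          integral_congr_ae (Filter.Eventually.of_forall hpoint)
      _ = ∑ S ∈ E, ∫ ω, c S * Set.indicator (C S t) (1 : Ω → ℝ) ω ∂μ :=
          integral_finset_sum E hint
      _ = ∑ S ∈ E, c S * (μ (C S t)).toReal := by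
          refine Finset.sum_congr rfl fun S _ => ?_
          rw [integral_const_mul, integral_indicator_one (hCmeas S t), measureReal_def]
      _ = p t := by
          refine Finset.sum_congr rfl fun S _ => ?_
          rw [hC S t, ENNReal.toReal_ofReal (pow_nonneg (hq0 S) t)]
  have hp0 : ∀ t, 0 ≤ p t := fun t => (hBval t) ▸ ENNReal.toReal_nonneg
  have hBval' : ∀ t, μ (B t) = ENNReal.ofReal (p t) := fun t => by
    rw [← hBval t, ENNReal.ofReal_toReal (measure_ne_top μ (B t))]
  -- summability
  have hgeom : ∀ S ∈ E, Summable (fun t : ℕ => c S * q S ^ t) := by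
    intro S hS
    exact (summable_geometric_of_lt_one (hq0 S) (hq1 S (hEne S hS))).mul_left (c S)
  have hpsummable : Summable p := summable_sum hgeom
  have hptsum : ∑' t, p t = ∑ S ∈ E, c S * (dS S)⁻¹ := by
    rw [show (∑' t, p t) = ∑' t, ∑ S ∈ E, c S * q S ^ t from rfl, Summable.tsum_finsetSum hgeom]
    refine Finset.sum_congr rfl fun S hS => ?_
    rw [tsum_mul_left, tsum_geometric_of_lt_one (hq0 S) (hq1 S (hEne S hS))]
    congr 1
    congr 1
    simp [hqdef]
  -- lintegral
  have hlt : ∀ t : ℕ, MeasurableSet {ω | t < Tf ω} := by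
    intro t
    have hrw : {ω | t < Tf ω} = {ω | Tf ω ≤ t}ᶜ := by
      ext ω; simp [not_le]
    rw [hrw]
    exact (hSlemeas t).compl
  have hlin : ∫⁻ ω, (Tf ω : ℝ≥0∞) ∂μ = ∑' t, μ (B t) := by
    have h1 : ∀ ω, (Tf ω : ℝ≥0∞)
        = ∑' t : ℕ, Set.indicator {ω' | t < Tf ω'} (1 : Ω → ℝ≥0∞) ω := by
      intro ω
      have hind : ∀ t : ℕ, Set.indicator {ω' | t < Tf ω'} (1 : Ω → ℝ≥0∞) ω
          = if t < Tf ω then 1 else 0 := by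
        intro t
        simp [Set.indicator_apply]
      simp_rw [hind]
      rw [tsum_eq_sum (s := Finset.range (Tf ω))
        (fun t ht => by simp only [Finset.mem_range, not_lt] at ht; simp [not_lt.2 ht])]
      rw [Finset.sum_congr rfl (fun t ht => if_pos (Finset.mem_range.1 ht))]
      simp
    calc ∫⁻ ω, (Tf ω : ℝ≥0∞) ∂μ
        = ∫⁻ ω, ∑' t : ℕ, Set.indicator {ω' | t < Tf ω'} (1 : Ω → ℝ≥0∞) ω ∂μ :=
          lintegral_congr h1
      _ = ∑' t : ℕ, ∫⁻ ω, Set.indicator {ω' | t < Tf ω'} (1 : Ω → ℝ≥0∞) ω ∂μ :=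
          lintegral_tsum fun t => (measurable_one.indicator (hlt t)).aemeasurable
      _ = ∑' t : ℕ, μ {ω | t < Tf ω} := tsum_congr fun t => lintegral_indicator_one (hlt t)
      _ = ∑' t, μ (B t) := tsum_congr hlevel
  -- LHS
  have hLHS : ∫ ω, ((Tf ω : ℕ) : ℝ) ∂μ = ∑ S ∈ E, c S * (dS S)⁻¹ := by
    rw [integral_eq_lintegral_of_nonneg_ae
      (Filter.Eventually.of_forall fun ω => Nat.cast_nonneg _)
      ((measurable_from_top.comp hTmeas).aestronglyMeasurable)]
    have hcast : ∀ ω, ENNReal.ofReal ((Tf ω : ℕ) : ℝ) = ((Tf ω : ℕ) : ℝ≥0∞) := fun ω =>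
      ENNReal.ofReal_natCast _
    simp_rw [hcast]
    rw [hlin]
    rw [tsum_congr hBval', ← ENNReal.ofReal_tsum_of_nonneg hp0 hpsummable,
      ENNReal.toReal_ofReal (tsum_nonneg hp0), hptsum]
  -- RHS
  have hRHS : ∫ t in Set.Ici (0 : ℝ), (1 - ∏ i, (1 - Real.exp (-(d i) * t)))
      = ∑ S ∈ E, c S * (dS S)⁻¹ := by
    rw [MeasureTheory.integral_Ici_eq_integral_Ioi]
    have hpt : ∀ t : ℝ, (1 - ∏ i, (1 - Real.exp (-(d i) * t)))
        = ∑ S ∈ E, c S * Real.exp (-(dS S) * t) := by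
      intro t
      rw [cc_one_sub_prod_one_sub (Finset.univ : Finset (Fin n))
        (fun i => Real.exp (-(d i) * t))]
      refine Finset.sum_congr rfl fun S hS => ?_
      rw [← Real.exp_sum]
      have hexp : ∑ i ∈ S, -(d i) * t = -(dS S) * t := by
        rw [← Finset.sum_mul]
        congr 1
        rw [hdS]
        exact Finset.sum_neg_distrib d
      rw [hexp]
    calc ∫ t in Set.Ioi (0 : ℝ), (1 - ∏ i, (1 - Real.exp (-(d i) * t)))
        = ∫ t in Set.Ioi (0 : ℝ), ∑ S ∈ E, c S * Real.exp (-(dS S) * t) :=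
          integral_congr_ae (Filter.Eventually.of_forall fun t => hpt t)
      _ = ∑ S ∈ E, ∫ t in Set.Ioi (0 : ℝ), c S * Real.exp (-(dS S) * t) :=
          integral_finset_sum E fun S hS =>
            ((exp_neg_integrableOn_Ioi 0 (hdSpos S (hEne S hS))).const_mul _)
      _ = ∑ S ∈ E, c S * (dS S)⁻¹ := by
          refine Finset.sum_congr rfl fun S hS => ?_
          rw [integral_const_mul]
          congr 1
          have hb := hdSpos S (hEne S hS)
          have h2 := integral_comp_mul_left_Ioi (fun x => Real.exp (-x)) 0 hb
          simp only [mul_zero, integral_exp_neg_Ioi_zero, smul_eq_mul, mul_one] at h2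
          rw [show (fun x : ℝ => Real.exp (-(dS S) * x)) = fun x : ℝ => Real.exp (-(dS S * x))
            from funext fun x => by rw [neg_mul]]
          exact h2
  exact ⟨hfin, by rw [hLHS, hRHS]⟩
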